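/- Let Λ be a single-vertex k-graph viewed as a monoid. For constructible right ideals X = ∪_{i=1}^l μ_i Λ and Y = ∪_{j=1}^{l'} ν_j Λ in Λ, the intersection X ∩ Y equals the union of the sets μ_i α Λ over all 1 ≤ i ≤ l and all α ∈ Ext(μ_i; {ν_1,…,ν_{l'}}), where Ext(μ; E) := {α : there exists β with (α,β) ∈ Λ^min(μ,ν) for some ν ∈ E}. -/
import Mathlib


/-- A single-vertex `k`-graph, viewed as a monoid `Λ` with a degree map
`d : Λ → ℕᵏ` satisfying the unique factorization property. -/
structure OneVertexKGraphStr (k : ℕ) (Λ : Type) [Monoid Λ] where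
  d : Λ → Fin k → ℕ
  d_one : d 1 = 0
  d_mul : ∀ μ ν, d (μ * ν) = d μ + d ν
  factor : ∀ (μ : Λ) (m n : Fin k → ℕ), d μ = m + n →
    ∃! p : Λ × Λ, μ = p.1 * p.2 ∧ d p.1 = m ∧ d p.2 = n


/-- `Λ^min(μ,ν) = {(α,β) : μα = νβ, d(μα) = d(μ) ∨ d(ν)}`. -/
def LambdaMin {k : ℕ} {Λ : Type} [Monoid Λ] (K : OneVertexKGraphStr k Λ)
    (μ ν : Λ) : Set (Λ × Λ) :=
  {p | μ * p.1 = ν * p.2 ∧ K.d (μ * p.1) = K.d μ ⊔ K.d ν}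

/-- `Ext(μ;E) = {α : (α,β) ∈ Λ^min(μ,ν) for some ν ∈ E and some β}`. -/
def ExtSet {k : ℕ} {Λ : Type} [Monoid Λ] (K : OneVertexKGraphStr k Λ)
    (μ : Λ) (E : Set Λ) : Set Λ :=
  {α | ∃ β ν, ν ∈ E ∧ (α, β) ∈ LambdaMin K μ ν}

/-- For `X = ∪ᵢ μᵢΛ` and `Y = ∪ⱼ νⱼΛ`,
`X ∩ Y = ∪ { μᵢαΛ : 1 ≤ i ≤ l, α ∈ Ext(μᵢ; {ν₁,…,ν_{l'}}) }`. -/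
theorem ideal_intersection {k : ℕ} {Λ : Type} [Monoid Λ]
    (K : OneVertexKGraphStr k Λ) {l l' : ℕ} (μ : Fin l → Λ) (ν : Fin l' → Λ) :
    ((⋃ i, {x | ∃ t, x = μ i * t}) ∩ ⋃ j, {x | ∃ t, x = ν j * t}) =
      ⋃ i, ⋃ α ∈ ExtSet K (μ i) (Set.range ν), {x | ∃ t, x = μ i * α * t} := by
  ext x
  simp only [Set.mem_inter_iff, Set.mem_iUnion, Set.mem_setOf_eq, ExtSet,
    LambdaMin, Set.mem_range]
  constructor
  · rintro ⟨⟨i, s, rfl⟩, ⟨j, u, hu⟩⟩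
    set m : Fin k → ℕ := K.d (μ i) ⊔ K.d (ν j) with hm
    have hdx : K.d (μ i * s) = K.d (μ i) + K.d s := K.d_mul _ _
    have hdx' : K.d (μ i * s) = K.d (ν j) + K.d u := by rw [hu]; exact K.d_mul _ _
    have hμm : ∀ p, K.d (μ i) p ≤ m p := fun p => le_sup_left
    have hνm : ∀ p, K.d (ν j) p ≤ m p := fun p => le_sup_right
    have hmx : ∀ p, m p ≤ K.d (μ i * s) p := by
      intro p
      have h1 := congrFun hdx p; have h2 := congrFun hdx' p
      simp only [Pi.add_apply] at h1 h2
      have : m p = K.d (μ i) p ⊔ K.d (ν j) p := rfl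
      simp only [this, sup_le_iff]; omega
    -- factor s = a * b with d a = m - d μ i
    have hds : K.d s = (m - K.d (μ i)) + (K.d (μ i * s) - m) := by
      funext p
      have h1 := congrFun hdx p
      simp only [Pi.add_apply, Pi.sub_apply] at h1 ⊢
      have := hμm p; have := hmx p; omega
    obtain ⟨⟨a, b⟩, ⟨hs, hda, hdb⟩, -⟩ := K.factor s _ _ hds
    have hdu : K.d u = (m - K.d (ν j)) + (K.d (μ i * s) - m) := by
      funext p
      have h2 := congrFun hdx' p
      simp only [Pi.add_apply, Pi.sub_apply] at h2 ⊢
      have := hνm p; have := hmx p; omega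
    obtain ⟨⟨a', b'⟩, ⟨hu', hda', hdb'⟩, -⟩ := K.factor u _ _ hdu
    have hdμa : K.d (μ i * a) = m := by
      rw [K.d_mul, hda]; funext p
      simp only [Pi.add_apply, Pi.sub_apply]
      have := hμm p; omega
    have hdνa' : K.d (ν j * a') = m := by
      rw [K.d_mul, hda']; funext p
      simp only [Pi.add_apply, Pi.sub_apply]
      have := hνm p; omega
    have hfac : K.d (μ i * s) = m + (K.d (μ i * s) - m) := by
      funext p
      simp only [Pi.add_apply, Pi.sub_apply]
      have := hmx p; omega
    obtain ⟨p0, -, huniq⟩ := K.factor (μ i * s) m (K.d (μ i * s) - m) hfac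
    have h1 := huniq (μ i * a, b) ⟨by rw [mul_assoc, ← hs], hdμa, hdb⟩
    have h2 := huniq (ν j * a', b') ⟨by rw [mul_assoc, ← hu', ← hu], hdνa', hdb'⟩
    have key : μ i * a = ν j * a' ∧ b = b' := by
      have := h1.trans h2.symm
      exact ⟨congrArg Prod.fst this, congrArg Prod.snd this⟩
    exact ⟨i, a, ⟨a', ν j, ⟨j, rfl⟩, key.1, by rw [hdμa]⟩, b, by rw [hs, ← mul_assoc]⟩
  · rintro ⟨i, α, ⟨β, ν', ⟨j, rfl⟩, hcomm, -⟩, t, rfl⟩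
    exact ⟨⟨i, α * t, by rw [mul_assoc]⟩,
      ⟨j, β * t, by rw [← mul_assoc, hcomm, mul_assoc]⟩⟩
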